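/- As p tends to 0 from above, the ratio (1 − p)^{1/p − 1} / (1 − (1 − p)^{1/p}) tends to e^{−1}/(1 − e^{−1}) ≈ 0.58. (Interpretation: the SAFFRON-inspired scheme finds an infected individual in a segment of 1/p individuals exactly when the segment contains exactly one infected individual, so conditional on the segment containing at least one infected individual, the probability of finding one tends to e^{−1}/(1 − e^{−1}), i.e. the scheme expects to find about 58% of those infected.) -/

import Mathlib

open Filter Real Set

lemma saffron_aux :
    Filter.Tendsto (fun p : ℝ => (1 - p) ^ (1 / p)) (nhdsWithin 0 (Set.Ioo (0:ℝ) 1))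
      (nhds (Real.exp (-1))) := by
  have hinv : Filter.Tendsto (fun p : ℝ => 1 / p) (nhdsWithin 0 (Set.Ioo (0:ℝ) 1)) atTop := by
    simp only [one_div]
    exact tendsto_inv_nhdsGT_zero.mono_left
      (nhdsWithin_mono _ (fun x hx => hx.1))
  have h := (tendsto_one_add_div_rpow_exp (-1)).comp hinv
  refine h.congr' ?_
  filter_upwards [self_mem_nhdsWithin] with p hp
  have hp0 : p ≠ 0 := ne_of_gt hp.1
  simp [Function.comp, div_div_eq_mul_div, hp0]
  ring_nf

/-- As `p → 0⁺`, the conditional probability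
`(1 - p)^(1/p - 1) / (1 - (1 - p)^(1/p))` tends to `e⁻¹ / (1 - e⁻¹)`. -/
theorem tendsto_saffron_conditional_prob :
    Filter.Tendsto
      (fun p : ℝ => (1 - p) ^ (1 / p - 1) / (1 - (1 - p) ^ (1 / p)))
      (nhdsWithin 0 (Set.Ioo (0:ℝ) 1))
      (nhds (Real.exp (-1) / (1 - Real.exp (-1)))) := by
  have hbase : Filter.Tendsto (fun p : ℝ => 1 - p) (nhdsWithin 0 (Set.Ioo (0:ℝ) 1))
      (nhds 1) := by
    have : Filter.Tendsto (fun p : ℝ => 1 - p) (nhds 0) (nhds (1 - 0)) :=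
      (continuous_const.sub continuous_id).tendsto 0
    simpa using this.mono_left nhdsWithin_le_nhds
  have hnum : Filter.Tendsto (fun p : ℝ => (1 - p) ^ (1 / p) / (1 - p))
      (nhdsWithin 0 (Set.Ioo (0:ℝ) 1)) (nhds (Real.exp (-1))) := by
    simpa [Pi.div_def] using saffron_aux.div hbase one_ne_zero
  have hden : Filter.Tendsto (fun p : ℝ => 1 - (1 - p) ^ (1 / p))
      (nhdsWithin 0 (Set.Ioo (0:ℝ) 1)) (nhds (1 - Real.exp (-1))) :=
    tendsto_const_nhds.sub saffron_aux
  have hne : (1 : ℝ) - Real.exp (-1) ≠ 0 := by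
    have := Real.exp_lt_one_iff.mpr (by norm_num : (-1:ℝ) < 0)
    linarith
  refine (hnum.div hden hne).congr' ?_
  filter_upwards [self_mem_nhdsWithin] with p hp
  have h1 : (0:ℝ) < 1 - p := by linarith [hp.2]
  simp only [Pi.div_apply]
  rw [Real.rpow_sub h1, Real.rpow_one]
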